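/- Let V be a 2-dimensional real vector space, h and ĥ non-degenerate symmetric bilinear forms on V, and B a nonzero skew-symmetric bilinear form on V. If for all ξ ∈ V, ĥ(ξ,ξ)·(ĥ⁻¹B)(ξ) = h(ξ,ξ)·(h⁻¹B)(ξ) as vectors in V (where h⁻¹B denotes the endomorphism obtained by raising an index of B with h), then ĥ = c·h for some nonzero constant c. -/

import Mathlib

/-- In dimension 2: if `ĥ(ξ,ξ)·(ĥ⁻¹B)(ξ) = h(ξ,ξ)·(h⁻¹B)(ξ)` for all `ξ`, with `h, ĥ`
non-degenerate symmetric and `B ≠ 0` skew, then `ĥ = c·h` for a nonzero constant `c`. -/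
theorem stmt6 {V : Type*} [AddCommGroup V] [Module ℝ V] [FiniteDimensional ℝ V]
    (hdim : Module.finrank ℝ V = 2)
    (h hhat : V →ₗ[ℝ] V →ₗ[ℝ] ℝ)
    (hsymm : ∀ v w, h v w = h w v) (hhatsymm : ∀ v w, hhat v w = hhat w v)
    (hnd : ∀ v, (∀ w, h v w = 0) → v = 0)
    (hhatnd : ∀ v, (∀ w, hhat v w = 0) → v = 0)
    (B : V →ₗ[ℝ] V →ₗ[ℝ] ℝ) (hBskew : ∀ v w, B v w = - B w v) (hB : B ≠ 0)
    (T That : V →ₗ[ℝ] V)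
    (hT : ∀ ξ w, h (T ξ) w = B ξ w) (hThat : ∀ ξ w, hhat (That ξ) w = B ξ w)
    (key : ∀ ξ : V, hhat ξ ξ • That ξ = h ξ ξ • T ξ) :
    ∃ c : ℝ, c ≠ 0 ∧ hhat = c • h := by
  have hBzero : ∀ ξ, B ξ ξ = 0 := fun ξ => by have := hBskew ξ ξ; linarith
  -- get v, w with B v w ≠ 0
  obtain ⟨v, w, hvw⟩ : ∃ v w, B v w ≠ 0 := by
    by_contra hc
    push_neg at hc
    exact hB (by ext v w; simp [hc])
  have hw0 : w ≠ 0 := by rintro rfl; simp at hvw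
  -- key consequence
  have keyw : ∀ ξ u, hhat ξ ξ * B ξ u = h ξ ξ * hhat (T ξ) u := by
    intro ξ u
    have h1 := congrArg (fun z => hhat z u) (key ξ)
    simpa [map_smul, LinearMap.smul_apply, smul_eq_mul, hThat] using h1
  -- find ξ with h ξ ξ ≠ 0 and B ξ w ≠ 0
  have livw : LinearIndependent ℝ ![v, w] := by
    rw [LinearIndependent.pair_iff]
    intro s t hst
    have h1 := congrArg (fun z => B z w) hst
    simp [map_add, map_smul, LinearMap.add_apply, LinearMap.smul_apply, smul_eq_mul,
      hBzero] at h1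
    have hs : s = 0 := h1.resolve_right hvw
    subst hs
    simp only [zero_smul, zero_add] at hst
    rcases smul_eq_zero.mp hst with ht | hw
    · exact ⟨rfl, ht⟩
    · exact absurd hw hw0
  obtain ⟨ξ, hqξ, hBξw⟩ : ∃ ξ, h ξ ξ ≠ 0 ∧ B ξ w ≠ 0 := by
    by_cases h1 : h v v ≠ 0
    · exact ⟨v, h1, hvw⟩
    by_cases h2 : h (v + w) (v + w) ≠ 0
    · exact ⟨v + w, h2, by simp [map_add, LinearMap.add_apply, hBzero, hvw]⟩
    by_cases h3 : h (v - w) (v - w) ≠ 0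
    · exact ⟨v - w, h3, by simp [map_sub, LinearMap.sub_apply, hBzero, hvw]⟩
    · exfalso
      push_neg at h1 h2 h3
      have e2 : h v v + h v w + h w v + h w w = 0 := by
        have := h2
        simp [map_add, LinearMap.add_apply] at this
        linarith
      have e3 : h v v - h v w - h w v + h w w = 0 := by
        have := h3
        simp [map_sub, LinearMap.sub_apply] at this
        linarith
      have hvw0 : h v w = 0 := by have := hsymm v w; linarith
      have hwv0 : h w v = 0 := by rw [← hsymm]; exact hvw0
      have hww0 : h w w = 0 := by linarith
      -- h vanishes on basis {v, w} hence h = 0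
      let bvw : Module.Basis (Fin 2) ℝ V :=
        basisOfLinearIndependentOfCardEqFinrank livw (by simp [hdim])
      have hbvw : ∀ i, bvw i = ![v, w] i := fun i => by
        simp [bvw, coe_basisOfLinearIndependentOfCardEqFinrank]
      have hzero : h = 0 := by
        apply bvw.ext; intro i; apply bvw.ext; intro j
        rw [hbvw i, hbvw j]
        fin_cases i <;> fin_cases j <;>
          simp [h1, hvw0, hwv0, hww0]
      have : v = 0 := hnd v (fun u => by simp [hzero])
      rw [this] at hvw; simp at hvw
  -- T ξ ≠ 0
  have hTξ0 : T ξ ≠ 0 := by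
    intro hz
    have := hT ξ w
    rw [hz] at this
    simp at this
    exact hBξw this.symm
  -- h ξ (T ξ) = 0
  have hξT : h ξ (T ξ) = 0 := by rw [hsymm, hT, hBzero]
  have hTξξ : h (T ξ) ξ = 0 := by rw [hT, hBzero]
  -- hhat (T ξ) ξ = 0
  have hhatTξξ : hhat (T ξ) ξ = 0 := by
    have h1 := keyw ξ ξ
    rw [hBzero, mul_zero] at h1
    exact (mul_eq_zero.mp h1.symm).resolve_left hqξ
  have hhatξT : hhat ξ (T ξ) = 0 := by rw [hhatsymm]; exact hhatTξξ
  -- relation on diagonal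
  have rel : hhat ξ ξ * h (T ξ) (T ξ) = h ξ ξ * hhat (T ξ) (T ξ) := by
    have h1 := keyw ξ (T ξ)
    rwa [show B ξ (T ξ) = h (T ξ) (T ξ) from (hT ξ (T ξ)).symm] at h1
  -- {ξ, T ξ} basis
  have li2 : LinearIndependent ℝ ![ξ, T ξ] := by
    rw [LinearIndependent.pair_iff]
    intro s t hst
    have h1 := congrArg (fun z => h z ξ) hst
    simp [map_add, map_smul, LinearMap.add_apply, LinearMap.smul_apply, smul_eq_mul,
      hTξξ] at h1
    have hs : s = 0 := h1.resolve_right hqξ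
    subst hs
    simp only [zero_smul, zero_add] at hst
    rcases smul_eq_zero.mp hst with ht | hz
    · exact ⟨rfl, ht⟩
    · exact absurd hz hTξ0
  let b2 : Module.Basis (Fin 2) ℝ V :=
    basisOfLinearIndependentOfCardEqFinrank li2 (by simp [hdim])
  have hb2 : ∀ i, b2 i = ![ξ, T ξ] i := fun i => by
    simp [b2, coe_basisOfLinearIndependentOfCardEqFinrank]
  -- hhat ξ ξ ≠ 0
  have hqhat : hhat ξ ξ ≠ 0 := by
    intro hz
    have hTdiag : hhat (T ξ) (T ξ) = 0 := by
      have := rel; rw [hz, zero_mul] at this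
      exact (mul_eq_zero.mp this.symm).resolve_left hqξ
    have hhzero : hhat = 0 := by
      apply b2.ext; intro i; apply b2.ext; intro j
      rw [hb2 i, hb2 j]
      fin_cases i <;> fin_cases j <;>
        simp [hz, hhatξT, hhatTξξ, hTdiag]
    have : ξ = 0 := hhatnd ξ (fun u => by simp [hhzero])
    rw [this] at hqξ; simp at hqξ
  refine ⟨hhat ξ ξ / h ξ ξ, div_ne_zero hqhat hqξ, ?_⟩
  apply b2.ext; intro i; apply b2.ext; intro j
  rw [hb2 i, hb2 j]
  fin_cases i <;> fin_cases j <;>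
    simp [hhatξT, hξT, hhatTξξ, hTξξ, LinearMap.smul_apply, smul_eq_mul]
  · field_simp
  · field_simp
    linarith [rel]
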